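/- Let M ≥ 1 and let θ ∈ ℂ satisfy θ^M = 1. Let u : ℤ × ℤ → ℂ satisfy (u_{n+1,m+1}+1)(u_{n,m+1}-1) = θ (u_{n+1,m}+1)(u_{n,m}-1) for all n,m ∈ ℤ. For each j with 1 ≤ j ≤ M define u^{(j)}_{n,k} = u_{n, Mk + j}. Then each u^{(j)} satisfies the θ = 1 equation: (u^{(j)}_{n+1,k+1}+1)(u^{(j)}_{n,k+1}-1) = (u^{(j)}_{n+1,k}+1)(u^{(j)}_{n,k}-1) for all n,k ∈ ℤ. -/
import Mathlib


/-- If `θ^M = 1` and `u` solves the lattice equation, then each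
sublattice function `u^{(j)}_{n,k} = u_{n,Mk+j}` (`1 ≤ j ≤ M`) solves the
equation with `θ = 1`. -/
theorem stmt_8 (M : ℕ) (hM : 1 ≤ M) (θ : ℂ) (hθ : θ ^ M = 1) (u : ℤ → ℤ → ℂ)
    (heq : ∀ n m : ℤ,
      (u (n + 1) (m + 1) + 1) * (u n (m + 1) - 1)
        = θ * ((u (n + 1) m + 1) * (u n m - 1))) :
    ∀ j : ℤ, 1 ≤ j → j ≤ M → ∀ n k : ℤ,
      (u (n + 1) (M * (k + 1) + j) + 1) * (u n (M * (k + 1) + j) - 1)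
        = (u (n + 1) (M * k + j) + 1) * (u n (M * k + j) - 1) := by
  have key : ∀ (t : ℕ) (n m : ℤ),
      (u (n + 1) (m + t) + 1) * (u n (m + t) - 1)
        = θ ^ t * ((u (n + 1) m + 1) * (u n m - 1)) := by
    intro t
    induction t with
    | zero => intro n m; simp
    | succ t ih =>
      intro n m
      have h1 : (m + ((t : ℤ) + 1)) = (m + t) + 1 := by ring
      push_cast
      rw [h1, heq n (m + t), ih, pow_succ]
      ring
  intro j _ _ n k
  have h2 : (M : ℤ) * (k + 1) + j = (M * k + j) + M := by ring
  rw [h2, key M n (M * k + j), hθ, one_mul]
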